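/- Let D₁ ≥ 2n+2 with n ≥ 1, and let H : ℝ^n → ℝ^{D₁} be continuous such that ℝ^n = ⋃_{j=1}^J closure(B_j) for open, pairwise disjoint sets B_1,…,B_J, and the restriction of H to each B_j is affine. Let v₁ ∈ S^{D₁−1} and let ρ, δ ∈ ℝ satisfy 0 < 8ρ ≤ δ < π. Then there exists a constant c₀ ∈ (0,1), depending only on D₁ and n, such that if ρ ≤ c₀ · J^{−2/(D₁−(2n+1))} · δ, then there exists w ∈ S^{D₁−1} with ‖w − v₁‖ < δ and ‖w − s(x,y)‖ ≥ ρ for all pairs (x,y) with x ≠ y and H(x) ≠ H(y), where s(x,y) = (H(x) − H(y))/‖H(x) − H(y)‖ and distances are measured in ℝ^{D₁}. -/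

import Mathlib

open MeasureTheory Metric Set Module
open scoped ENNReal


lemma tube_volume_le (D d : ℕ) (hdD : d ≤ D) (L : Submodule ℝ (EuclideanSpace ℝ (Fin D)))
    (hL : Module.finrank ℝ L ≤ d) (v : EuclideanSpace ℝ (Fin D)) (r ρ : ℝ)
    (hr : 0 ≤ r) (hρ : 0 ≤ ρ) :
    MeasureTheory.volume {x : EuclideanSpace ℝ (Fin D) |
        ‖x - v‖ < r ∧ ∃ s ∈ L, ‖x - s‖ < ρ} ≤
      ENNReal.ofReal ((2*r)^d * (2*ρ)^(D-d)) := by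
  classical
  set d' := Module.finrank ℝ L with hd'
  have hd'd : d' ≤ d := hL
  set ob := stdOrthonormalBasis ℝ L with hob
  set v' : Fin D → EuclideanSpace ℝ (Fin D) :=
    fun i => if h : (i : ℕ) < d' then ((ob ⟨i, h⟩ : L) : EuclideanSpace ℝ (Fin D)) else 0 with hv'
  set sset : Set (Fin D) := {i : Fin D | (i : ℕ) < d'} with hsset
  have hι : Orthonormal ℝ (fun j : Fin d' => ((ob j : L) : EuclideanSpace ℝ (Fin D))) := by
    have := ob.orthonormal
    constructor
    · intro j; exact this.1 j
    · intro j k hjk; simpa [Submodule.coe_inner] using this.2 hjk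
  have hortho : Orthonormal ℝ (sset.restrict v') := by
    have heq : sset.restrict v' =
        (fun j : Fin d' => ((ob j : L) : EuclideanSpace ℝ (Fin D))) ∘
          (fun i : sset => (⟨(i : Fin D), i.2⟩ : Fin d')) := by
      funext i
      simp only [Set.restrict, Function.comp, hv']
      exact dif_pos i.2
    rw [heq]
    exact hι.comp _ (fun a b hab => by
      apply Subtype.ext
      simpa [Fin.ext_iff] using congrArg Fin.val hab)
  have hcard : Module.finrank ℝ (EuclideanSpace ℝ (Fin D)) = Fintype.card (Fin D) := by
    simp [finrank_euclideanSpace]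
  obtain ⟨b, hb⟩ := hortho.exists_orthonormalBasis_extension_of_card_eq hcard
  -- key orthogonality
  have key : ∀ i : Fin D, d ≤ (i : ℕ) → ∀ z ∈ L, inner ℝ (b i) z = (0:ℝ) := by
    intro i hi z hz
    have hspan : L = Submodule.span ℝ
        (Set.range (fun j : Fin d' => ((ob j : L) : EuclideanSpace ℝ (Fin D)))) := by
      conv_lhs => rw [← Submodule.map_subtype_top L, ← ob.toBasis.span_eq]
      rw [Submodule.map_span]
      congr 1
      ext x
      simp [Set.range_comp]
      exact Iff.rfl
    rw [hspan] at hz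
    induction hz using Submodule.span_induction with
    | mem x hx =>
      obtain ⟨j, rfl⟩ := hx
      have hj : ((j : ℕ) : ℕ) < d' := j.2
      have hjD : (j : ℕ) < D := lt_of_lt_of_le hj (hd'd.trans hdD)
      have hmem : (⟨(j : ℕ), hjD⟩ : Fin D) ∈ sset := by simpa [hsset] using hj
      have hveq : ((ob j : L) : EuclideanSpace ℝ (Fin D)) = b ⟨(j : ℕ), hjD⟩ := by
        rw [hb _ hmem]
        simp only [hv']
        rw [dif_pos (show ((⟨(j : ℕ), hjD⟩ : Fin D) : ℕ) < d' from hj)]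
      simp only [hveq]
      apply b.orthonormal.2
      intro hcon
      have : (i : ℕ) = (j : ℕ) := by simpa [Fin.ext_iff] using hcon
      omega
    | zero => simp
    | add x y hx hy ihx ihy => rw [inner_add_right, ihx, ihy]; simp
    | smul a x hx ih => rw [inner_smul_right, ih]; simp
  -- measure-preserving map to pi
  have mp := (EuclideanSpace.volume_preserving_symm_measurableEquiv_toLp (Fin D)).comp
    b.measurePreserving_measurableEquiv
  set I : Fin D → Set ℝ := fun i =>
    if (i : ℕ) < d then Ioo ((b.repr v) i - r) ((b.repr v) i + r) else Ioo (-ρ) ρ with hI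
  have happ : ∀ (x : EuclideanSpace ℝ (Fin D)) (i : Fin D),
      (((MeasurableEquiv.toLp 2 (Fin D → ℝ)).symm) (b.measurableEquiv x)) i = b.repr x i := by
    intro x i; rfl
  have hsub : {x : EuclideanSpace ℝ (Fin D) | ‖x - v‖ < r ∧ ∃ s ∈ L, ‖x - s‖ < ρ} ⊆
      (⇑((MeasurableEquiv.toLp 2 (Fin D → ℝ)).symm) ∘ ⇑b.measurableEquiv) ⁻¹' (Set.univ.pi I) := by
    rintro x ⟨hball, s₀, hs₀L, hs₀⟩
    intro i _
    simp only [Function.comp, happ, hI]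
    split_ifs with hid
    · have h1 : b.repr x i - b.repr v i = inner ℝ (b i) (x - v) := by
        rw [← b.repr_apply_apply (x - v) i, map_sub]; rfl
      have h2 : |b.repr x i - b.repr v i| < r := by
        rw [h1]
        calc |inner ℝ (b i) (x - v)| ≤ ‖b i‖ * ‖x - v‖ := abs_real_inner_le_norm _ _
        _ = ‖x - v‖ := by rw [b.orthonormal.1 i, one_mul]
        _ < r := hball
      constructor <;> [linarith [abs_lt.1 h2]; linarith [abs_lt.1 h2]]
    · have hzero : inner ℝ (b i) s₀ = (0:ℝ) := key i (le_of_not_gt hid) s₀ hs₀L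
      have h1 : b.repr x i = inner ℝ (b i) (x - s₀) := by
        rw [inner_sub_right, hzero, sub_zero, b.repr_apply_apply]
      have h2 : |b.repr x i| < ρ := by
        rw [h1]
        calc |inner ℝ (b i) (x - s₀)| ≤ ‖b i‖ * ‖x - s₀‖ := abs_real_inner_le_norm _ _
        _ = ‖x - s₀‖ := by rw [b.orthonormal.1 i, one_mul]
        _ < ρ := hs₀
      exact abs_lt.1 h2
  have hmeas : MeasurableSet (Set.univ.pi I) := by
    apply MeasurableSet.univ_pi
    intro i
    simp only [hI]
    split_ifs <;> exact measurableSet_Ioo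
  calc volume {x : EuclideanSpace ℝ (Fin D) | ‖x - v‖ < r ∧ ∃ s ∈ L, ‖x - s‖ < ρ}
      ≤ volume ((⇑((MeasurableEquiv.toLp 2 (Fin D → ℝ)).symm) ∘ ⇑b.measurableEquiv) ⁻¹'
        (Set.univ.pi I)) := measure_mono hsub
    _ = volume (Set.univ.pi I) := mp.measure_preimage hmeas.nullMeasurableSet
    _ = ∏ i, volume (I i) := volume_pi_pi I
    _ = ∏ i : Fin D, (if (i : ℕ) < d then ENNReal.ofReal (2*r) else ENNReal.ofReal (2*ρ)) := by
        apply Finset.prod_congr rfl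
        intro i _
        simp only [hI]
        split_ifs
        · rw [Real.volume_Ioo]; ring_nf
        · rw [Real.volume_Ioo]; ring_nf
    _ = ENNReal.ofReal (2*r) ^ d * ENNReal.ofReal (2*ρ) ^ (D - d) := by
        rw [Finset.prod_ite]
        simp only [Finset.prod_const]
        have hfilt : (Finset.univ.filter fun i : Fin D => (i : ℕ) < d)
            = Finset.map (Fin.castLEEmb hdD) Finset.univ := by
          ext i
          simp only [Finset.mem_filter, Finset.mem_univ, true_and, Finset.mem_map]
          constructor
          · intro h
            exact ⟨⟨(i : ℕ), h⟩, Fin.ext rfl⟩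
          · rintro ⟨j, rfl⟩
            exact j.2
        have hc1 : (Finset.univ.filter fun i : Fin D => (i : ℕ) < d).card = d := by
          rw [hfilt, Finset.card_map, Finset.card_univ, Fintype.card_fin]
        have hc2 : (Finset.univ.filter fun i : Fin D => ¬ (i : ℕ) < d).card = D - d := by
          have := Finset.card_filter_add_card_filter_not
            (s := (Finset.univ : Finset (Fin D))) (p := fun i : Fin D => (i : ℕ) < d)
          rw [Finset.card_univ, Fintype.card_fin] at this
          omega
        rw [hc1, hc2]
    _ = ENNReal.ofReal ((2*r)^d * (2*ρ)^(D-d)) := by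
        rw [← ENNReal.ofReal_pow (by linarith : (0:ℝ) ≤ 2*r),
          ← ENNReal.ofReal_pow (by linarith : (0:ℝ) ≤ 2*ρ),
          ← ENNReal.ofReal_mul (by positivity)]


lemma ball_volume_ge (D : ℕ) (hD : 0 < D) (v : EuclideanSpace ℝ (Fin D)) (r : ℝ) (hr : 0 < r) :
    ENNReal.ofReal ((2*r/Real.sqrt D)^D) ≤ MeasureTheory.volume (Metric.ball v r) := by
  have : Nonempty (Fin D) := Fin.pos_iff_nonempty.1 hD
  set t := r / Real.sqrt D with ht
  have hsq : (0:ℝ) < Real.sqrt D := Real.sqrt_pos.2 (by exact_mod_cast hD)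
  have htpos : 0 < t := div_pos hr hsq
  set I : Fin D → Set ℝ := fun i => Ioo (v i - t) (v i + t) with hI
  have hsub : (⇑((MeasurableEquiv.toLp 2 (Fin D → ℝ)).symm)) ⁻¹' (Set.univ.pi I)
      ⊆ Metric.ball v r := by
    intro x hx
    have hx' : ∀ i, |x i - v i| < t := by
      intro i
      have h2 := hx i (Set.mem_univ i)
      simp only [hI] at h2
      rw [Set.mem_Ioo] at h2
      change v i - t < x i ∧ x i < v i + t at h2
      rw [abs_sub_lt_iff]
      exact ⟨by linarith [h2.1, h2.2], by linarith [h2.1, h2.2]⟩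
    rw [mem_ball, dist_eq_norm, EuclideanSpace.norm_eq]
    apply (Real.sqrt_lt' hr).2
    calc ∑ i, ‖(x - v) i‖^2 < ∑ _i : Fin D, t^2 := by
          apply Finset.sum_lt_sum_of_nonempty Finset.univ_nonempty
          intro i _
          have h3 : ‖(x - v) i‖ = |x i - v i| := by
            simp [PiLp.sub_apply, Real.norm_eq_abs]
          rw [h3]
          exact pow_lt_pow_left₀ (hx' i) (abs_nonneg _) (by norm_num)
      _ = D * t^2 := by rw [Finset.sum_const]; simp [nsmul_eq_mul]
      _ = r^2 := by
          rw [ht, div_pow, Real.sq_sqrt (by positivity : (0:ℝ) ≤ (D:ℝ))]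
          field_simp
  have hmeas : MeasurableSet (Set.univ.pi I) :=
    MeasurableSet.univ_pi fun i => measurableSet_Ioo
  calc ENNReal.ofReal ((2*r/Real.sqrt D)^D)
      = ∏ _i : Fin D, ENNReal.ofReal (2*t) := by
        rw [Finset.prod_const, ← ENNReal.ofReal_pow (by linarith), Finset.card_univ,
          Fintype.card_fin]
        congr 1
        rw [ht]; ring_nf
    _ = ∏ i, MeasureTheory.volume (I i) := by
        apply Finset.prod_congr rfl
        intro i _
        rw [hI]
        rw [Real.volume_Ioo]
        congr 1
        ring
    _ = MeasureTheory.volume (Set.univ.pi I) := (volume_pi_pi I).symm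
    _ = MeasureTheory.volume ((⇑((MeasurableEquiv.toLp 2 (Fin D → ℝ)).symm)) ⁻¹' (Set.univ.pi I)) :=
        ((EuclideanSpace.volume_preserving_symm_measurableEquiv_toLp (Fin D)).measure_preimage
          hmeas.nullMeasurableSet).symm
    _ ≤ MeasureTheory.volume (Metric.ball v r) := measure_mono hsub

set_option maxHeartbeats 1000000 in
/-- **Avoiding secant directions of piecewise affine maps** (sphere packing lemma):
for `D₁ ≥ 2n+2`, `n ≥ 1`, there is a constant `c₀ ∈ (0,1)` depending only on `D₁` and `n`
such that, for every continuous `H : ℝ^n → ℝ^{D₁}` that is affine on each of `J` open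
disjoint pieces whose closures cover `ℝ^n`, every unit vector `v₁`, and all
`0 < 8ρ ≤ δ < π` with `ρ ≤ c₀ · J^{−2/(D₁−(2n+1))} · δ`, there is a unit vector `w` with
`‖w − v₁‖ < δ` that stays at distance `≥ ρ` from all normalized secant directions of `H`. -/
theorem exists_direction_avoiding_secants (n D₁ : ℕ) (hn : 1 ≤ n) (hD : 2 * n + 2 ≤ D₁) :
    ∃ c₀ : ℝ, 0 < c₀ ∧ c₀ < 1 ∧
      ∀ (J : ℕ) (B : Fin J → Set (EuclideanSpace ℝ (Fin n)))
        (H : EuclideanSpace ℝ (Fin n) → EuclideanSpace ℝ (Fin D₁)),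
        Continuous H →
        (∀ j, IsOpen (B j)) →
        (Pairwise fun j j' => Disjoint (B j) (B j')) →
        (⋃ j, closure (B j)) = Set.univ →
        (∀ j, ∃ (T : EuclideanSpace ℝ (Fin n) →ₗ[ℝ] EuclideanSpace ℝ (Fin D₁))
          (b : EuclideanSpace ℝ (Fin D₁)), ∀ x ∈ B j, H x = T x + b) →
        ∀ (v₁ : EuclideanSpace ℝ (Fin D₁)), ‖v₁‖ = 1 →
        ∀ ρ δ : ℝ, 0 < ρ → 8 * ρ ≤ δ → δ < Real.pi →
        ρ ≤ c₀ * (J : ℝ) ^ (-(2 / ((D₁ : ℝ) - (2 * n + 1)))) * δ →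
        ∃ w : EuclideanSpace ℝ (Fin D₁), ‖w‖ = 1 ∧ ‖w - v₁‖ < δ ∧
          ∀ x y, x ≠ y → H x ≠ H y →
            ρ ≤ ‖w - ‖H x - H y‖⁻¹ • (H x - H y)‖ := by
  classical
  set m : ℕ := 2 * n + 1 with hm
  set q : ℕ := D₁ - (2 * n + 1) with hqdef
  have hq1 : 1 ≤ q := by omega
  have hmq : m + q = D₁ := by omega
  have hmD : m ≤ D₁ := by omega
  have hD₁pos : 0 < D₁ := by omega
  have hsqrtpos : (0:ℝ) < Real.sqrt D₁ := Real.sqrt_pos.2 (by exact_mod_cast hD₁pos)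
  set K : ℝ := (2/(7*Real.sqrt D₁))^D₁ / ((2/7)^m * 6^q) with hKdef
  have hK : 0 < K := by positivity
  set c₀ : ℝ := min (1/2) (K ^ (1/(q:ℝ)) / 2) with hc₀def
  have hc₀pos : 0 < c₀ := by
    apply lt_min (by norm_num)
    have : (0:ℝ) < K ^ (1/(q:ℝ)) := Real.rpow_pos_of_pos hK _
    linarith
  have hc₀lt1 : c₀ < 1 := lt_of_le_of_lt (min_le_left _ _) (by norm_num)
  have hc₀K : c₀ ^ q < K := by
    have h1 : c₀ ≤ K ^ (1/(q:ℝ)) / 2 := min_le_right _ _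
    have h2 : c₀ ^ q ≤ (K ^ (1/(q:ℝ)) / 2) ^ q :=
      pow_le_pow_left₀ hc₀pos.le h1 q
    have h3 : (K ^ (1/(q:ℝ)) / 2) ^ q = K / 2 ^ q := by
      rw [div_pow]
      congr 1
      rw [← Real.rpow_natCast (K ^ (1/(q:ℝ))) q, ← Real.rpow_mul hK.le]
      rw [show (1/(q:ℝ)) * q = 1 by field_simp, Real.rpow_one]
    have h4 : K / 2 ^ q < K := by
      apply div_lt_self hK
      have : (1:ℝ) < 2 ^ q := one_lt_pow₀ (by norm_num) (by omega)
      linarith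
    calc c₀ ^ q ≤ K / 2 ^ q := h3 ▸ h2
      _ < K := h4
  refine ⟨c₀, hc₀pos, hc₀lt1, ?_⟩
  intro J B H hH hopen hdisj hcover haff v₁ hv₁ ρ δ hρ h8ρ hδπ hρc
  have hδ : 0 < δ := by linarith
  have hJ : 0 < J := by
    rcases Nat.eq_zero_or_pos J with h0 | h
    · subst h0
      have h1 : (0 : EuclideanSpace ℝ (Fin n)) ∈ (⋃ j : Fin 0, closure (B j)) := by
        rw [hcover]; trivial
      simp at h1
    · exact h
  choose T b' hTb' using haff
  have hclosure : ∀ j, ∀ x ∈ closure (B j), H x = T j x + b' j := by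
    intro j x hx
    have hcont : Continuous fun y => T j y + b' j :=
      ((T j).continuous_of_finiteDimensional).add continuous_const
    exact (Set.EqOn.closure (fun y hy => hTb' j y hy) hH hcont) hx
  set L : Fin J → Fin J → Submodule ℝ (EuclideanSpace ℝ (Fin D₁)) :=
    fun j j' => (LinearMap.range (T j) ⊔ LinearMap.range (T j')) ⊔
      Submodule.span ℝ {b' j - b' j'} with hLdef
  have hsup : ∀ (A A' : Submodule ℝ (EuclideanSpace ℝ (Fin D₁))),
      finrank ℝ (A ⊔ A' : Submodule ℝ (EuclideanSpace ℝ (Fin D₁))) ≤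
        finrank ℝ A + finrank ℝ A' := by
    intro A A'
    have := Submodule.finrank_sup_add_finrank_inf_eq A A'
    omega
  have hLrank : ∀ j j', finrank ℝ (L j j') ≤ m := by
    intro j j'
    have h1 : finrank ℝ (LinearMap.range (T j)) ≤ n := by
      have := (T j).finrank_range_le
      rwa [finrank_euclideanSpace, Fintype.card_fin] at this
    have h1' : finrank ℝ (LinearMap.range (T j')) ≤ n := by
      have := (T j').finrank_range_le
      rwa [finrank_euclideanSpace, Fintype.card_fin] at this
    have h2 : finrank ℝ (Submodule.span ℝ {b' j - b' j'} :
        Submodule ℝ (EuclideanSpace ℝ (Fin D₁))) ≤ 1 := by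
      rcases eq_or_ne (b' j - b' j') 0 with h | h
      · rw [h, Submodule.span_zero_singleton]; simp
      · rw [finrank_span_singleton h]
    calc finrank ℝ (L j j') ≤
        finrank ℝ (LinearMap.range (T j) ⊔ LinearMap.range (T j') :
          Submodule ℝ (EuclideanSpace ℝ (Fin D₁))) +
        finrank ℝ (Submodule.span ℝ {b' j - b' j'} :
          Submodule ℝ (EuclideanSpace ℝ (Fin D₁))) := hsup _ _
      _ ≤ (finrank ℝ (LinearMap.range (T j)) + finrank ℝ (LinearMap.range (T j'))) + 1 :=
          add_le_add (hsup _ _) h2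
      _ ≤ m := by omega
  have hsec : ∀ x y : EuclideanSpace ℝ (Fin n), ∃ j j', H x - H y ∈ L j j' := by
    intro x y
    have hx : x ∈ ⋃ j, closure (B j) := by rw [hcover]; trivial
    have hy : y ∈ ⋃ j, closure (B j) := by rw [hcover]; trivial
    obtain ⟨j, hj⟩ := Set.mem_iUnion.1 hx
    obtain ⟨j', hj'⟩ := Set.mem_iUnion.1 hy
    refine ⟨j, j', ?_⟩
    rw [hclosure j x hj, hclosure j' y hj']
    have h1 : T j x ∈ L j j' :=
      Submodule.mem_sup_left (Submodule.mem_sup_left ⟨x, rfl⟩)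
    have h2 : T j' y ∈ L j j' :=
      Submodule.mem_sup_left (Submodule.mem_sup_right ⟨y, rfl⟩)
    have h3 : b' j - b' j' ∈ L j j' :=
      Submodule.mem_sup_right (Submodule.mem_span_singleton_self _)
    have heq : T j x + b' j - (T j' y + b' j') = (T j x - T j' y) + (b' j - b' j') := by abel
    rw [heq]
    exact Submodule.add_mem _ (Submodule.sub_mem _ h1 h2) h3
  set r : ℝ := δ / 7 with hrdef
  set ρ' : ℝ := 3 * ρ with hρ'def
  have hrpos : 0 < r := by positivity
  have hρ'pos : 0 < ρ' := by positivity
  set bad : Fin J × Fin J → Set (EuclideanSpace ℝ (Fin D₁)) :=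
    fun i => {x | ‖x - v₁‖ < r ∧ ∃ s ∈ L i.1 i.2, ‖x - s‖ < ρ'} with hbaddef
  have htube : ∀ i, MeasureTheory.volume (bad i) ≤
      ENNReal.ofReal ((2*r)^m * (2*ρ')^q) := by
    intro i
    have := tube_volume_le D₁ m hmD (L i.1 i.2) (hLrank i.1 i.2) v₁ r ρ' hrpos.le hρ'pos.le
    have hq : D₁ - m = q := by omega
    rwa [hq] at this
  -- key arithmetic inequality
  have harith : (J:ℝ) * (J:ℝ) * ((2*r)^m * (2*ρ')^q) < (2*r/Real.sqrt D₁)^D₁ := by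
    have hq'q : (D₁:ℝ) - (2*(n:ℝ)+1) = (q:ℝ) := by
      rw [hqdef]
      push_cast [Nat.cast_sub (show 2*n+1 ≤ D₁ by omega)]
      ring
    set A : ℝ := (J:ℝ) ^ (-(2 / ((D₁ : ℝ) - (2 * n + 1)))) with hAdef
    have hJpos : (0:ℝ) < (J:ℝ) := by exact_mod_cast hJ
    have hApos : 0 < A := Real.rpow_pos_of_pos hJpos _
    have hAq : A ^ q = ((J:ℝ)^2)⁻¹ := by
      rw [hAdef, ← Real.rpow_natCast ((J:ℝ) ^ _) q, ← Real.rpow_mul hJpos.le]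
      rw [show (-(2 / ((D₁ : ℝ) - (2 * ↑n + 1))) * (q:ℝ)) = -2 by
        rw [hq'q]; field_simp]
      rw [show ((-2):ℝ) = ((-2 : ℤ):ℝ) by norm_num, Real.rpow_intCast]
      rw [zpow_neg]
      norm_cast
    have hρA : ρ ≤ c₀ * A * δ := hρc
    have hstep : (2*ρ')^q ≤ 6^q * c₀^q * A^q * δ^q := by
      have h6 : 2*ρ' = 6*ρ := by rw [hρ'def]; ring
      rw [h6]
      calc (6*ρ)^q ≤ (6*(c₀ * A * δ))^q :=
            pow_le_pow_left₀ (by positivity) (by nlinarith) q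
        _ = 6^q * c₀^q * A^q * δ^q := by ring
    have hRHS : (2*r/Real.sqrt D₁)^D₁ = (2/(7*Real.sqrt D₁))^D₁ * δ^D₁ := by
      rw [hrdef, show 2*(δ/7)/Real.sqrt D₁ = (2/(7*Real.sqrt D₁)) * δ by field_simp,
        mul_pow]
    have hLHSm : (2*r)^m = (2/7)^m * δ^m := by
      rw [hrdef, show 2*(δ/7) = (2/7)*δ by ring, mul_pow]
    calc (J:ℝ) * (J:ℝ) * ((2*r)^m * (2*ρ')^q)
        ≤ (J:ℝ) * (J:ℝ) * ((2*r)^m * (6^q * c₀^q * A^q * δ^q)) := by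
          apply mul_le_mul_of_nonneg_left _ (by positivity)
          apply mul_le_mul_of_nonneg_left hstep (by positivity)
      _ = ((J:ℝ) * (J:ℝ) * A^q) * ((2/7)^m * 6^q * c₀^q * (δ^m * δ^q)) := by
          rw [hLHSm]; ring
      _ = (2/7)^m * 6^q * c₀^q * δ^D₁ := by
          rw [hAq]
          rw [show (J:ℝ) * (J:ℝ) * ((J:ℝ)^2)⁻¹ = 1 by field_simp]
          rw [← pow_add, hmq]
          ring
      _ < (2/7)^m * 6^q * K * δ^D₁ := by
          apply mul_lt_mul_of_pos_right _ (by positivity)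
          apply mul_lt_mul_of_pos_left hc₀K (by positivity)
      _ = (2/(7*Real.sqrt D₁))^D₁ * δ^D₁ := by
          rw [hKdef]
          field_simp
      _ = (2*r/Real.sqrt D₁)^D₁ := hRHS.symm
  -- find a point p
  have hbadtotal : MeasureTheory.volume (⋃ i, bad i) <
      MeasureTheory.volume (Metric.ball v₁ r) := by
    calc MeasureTheory.volume (⋃ i, bad i)
        ≤ ∑' i : Fin J × Fin J, MeasureTheory.volume (bad i) := measure_iUnion_le _
      _ ≤ ∑' _i : Fin J × Fin J, ENNReal.ofReal ((2*r)^m * (2*ρ')^q) :=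
          ENNReal.tsum_le_tsum htube
      _ = ((J * J : ℕ) : ℝ≥0∞) * ENNReal.ofReal ((2*r)^m * (2*ρ')^q) := by
          rw [tsum_fintype, Finset.sum_const, Finset.card_univ, Fintype.card_prod,
            Fintype.card_fin, nsmul_eq_mul]
      _ = ENNReal.ofReal ((J:ℝ) * (J:ℝ) * ((2*r)^m * (2*ρ')^q)) := by
          rw [← ENNReal.ofReal_natCast (J*J), ← ENNReal.ofReal_mul (by positivity)]
          congr 1
          push_cast
          ring
      _ < ENNReal.ofReal ((2*r/Real.sqrt D₁)^D₁) := by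
          exact (ENNReal.ofReal_lt_ofReal_iff_of_nonneg (by positivity)).2 harith
      _ ≤ MeasureTheory.volume (Metric.ball v₁ r) := ball_volume_ge D₁ hD₁pos v₁ r hrpos
  have hne : ¬ (Metric.ball v₁ r ⊆ ⋃ i, bad i) := by
    intro hsub
    exact absurd (measure_mono hsub) (not_le.2 hbadtotal)
  obtain ⟨p, hpball, hpn⟩ := Set.not_subset.1 hne
  have hpnorm : ‖p - v₁‖ < r := by rwa [mem_ball, dist_eq_norm] at hpball
  have hpfar : ∀ i : Fin J × Fin J, ∀ s ∈ L i.1 i.2, ρ' ≤ ‖p - s‖ := by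
    intro i s hs
    by_contra hlt
    push_neg at hlt
    exact hpn (Set.mem_iUnion.2 ⟨i, hpnorm, s, hs, hlt⟩)
  have hπ : Real.pi < 3.15 := Real.pi_lt_d2
  have hr45 : r < 0.45 := by
    rw [hrdef]; linarith
  have habs : |‖p‖ - ‖v₁‖| ≤ ‖p - v₁‖ := abs_norm_sub_norm_le _ _
  have hplb : (0.55:ℝ) < ‖p‖ := by
    rw [hv₁] at habs
    cases abs_le.1 habs with
    | intro h1 h2 => linarith
  have hpub : ‖p‖ < 3 := by
    rw [hv₁] at habs
    cases abs_le.1 habs with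
    | intro h1 h2 => linarith
  have hp0 : p ≠ 0 := by
    intro h
    rw [h, norm_zero] at hplb
    linarith
  refine ⟨‖p‖⁻¹ • p, ?_, ?_, ?_⟩
  · rw [norm_smul, norm_inv, norm_norm, inv_mul_cancel₀ (ne_of_gt (by linarith : (0:ℝ) < ‖p‖))]
  · have hwp : ‖‖p‖⁻¹ • p - p‖ = |1 - ‖p‖| := by
      have : ‖p‖⁻¹ • p - p = (‖p‖⁻¹ - 1) • p := by rw [sub_smul, one_smul]
      rw [this, norm_smul, Real.norm_eq_abs]
      rw [← abs_of_pos (show (0:ℝ) < ‖p‖ by linarith), ← abs_mul]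
      congr 1
      field_simp
      rw [abs_of_pos (show (0:ℝ) < ‖p‖ by linarith)]; ring
    have h1 : |1 - ‖p‖| ≤ ‖p - v₁‖ := by
      rw [hv₁] at habs
      rw [abs_sub_comm]
      exact habs
    calc ‖‖p‖⁻¹ • p - v₁‖ ≤ ‖‖p‖⁻¹ • p - p‖ + ‖p - v₁‖ := norm_sub_le_norm_sub_add_norm_sub _ _ _
      _ < r + r := by rw [hwp]; exact add_lt_add (lt_of_le_of_lt h1 hpnorm) hpnorm
      _ ≤ δ := by rw [hrdef]; linarith
  · intro x y _ _
    obtain ⟨j, j', hmem⟩ := hsec x y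
    set s₀ : EuclideanSpace ℝ (Fin D₁) := ‖H x - H y‖⁻¹ • (H x - H y) with hs₀def
    have hs₀L : s₀ ∈ L j j' := Submodule.smul_mem _ _ hmem
    have hps₀ : ‖p‖ • s₀ ∈ L j j' := Submodule.smul_mem _ _ hs₀L
    have hfar : ρ' ≤ ‖p - ‖p‖ • s₀‖ := hpfar (j, j') _ hps₀
    have heq : ‖p‖⁻¹ • p - s₀ = ‖p‖⁻¹ • (p - ‖p‖ • s₀) := by
      rw [smul_sub, smul_smul, inv_mul_cancel₀ (ne_of_gt (by linarith : (0:ℝ) < ‖p‖)), one_smul]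
    rw [heq, norm_smul, norm_inv, norm_norm]
    calc ρ = (1/3) * ρ' := by rw [hρ'def]; ring
      _ ≤ ‖p‖⁻¹ * ‖p - ‖p‖ • s₀‖ := by
          apply mul_le_mul _ hfar hρ'pos.le (by positivity)
          rw [inv_eq_one_div, le_div_iff₀ (by linarith : (0:ℝ) < ‖p‖)]
          linarith
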